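/- Let K ⊆ L be fields, let n ≥ 1, and let v₁, …, vₙ be an L-basis of L^n. For each k ∈ {1, …, n} let p_k : L^n → L^k denote the projection onto the last k coordinates, and let F_k ⊆ L^k be the K-linear span of p_k(v₁), …, p_k(vₙ); assume that for every k the multiplication map L ⊗_K F_k → L^k, ℓ ⊗ w ↦ ℓ · w, is bijective (i.e. F_k is a K-lattice of L^k). Then there exist vectors w₁, …, wₙ ∈ L^n whose K-linear span equals the K-linear span of v₁, …, vₙ and such that the n × n matrix over L whose j-th column is w_j is upper triangular with nonzero diagonal entries (the i-th coordinate of w_j is 0 for i > j and nonzero for i = j). -/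

import Mathlib

open scoped TensorProduct

set_option maxHeartbeats 1000000
set_option synthInstance.maxHeartbeats 1000000

/-- The projection `L^n → L^k` onto the last `k` coordinates (junk value `0` out of range). -/
noncomputable def lastCoordsProj {L : Type*} [Zero L] (n k : ℕ) (x : Fin n → L) (i : Fin k) : L :=
  if h : n - k + i.val < n then x ⟨n - k + i.val, h⟩ else 0

section Aux

variable {K L : Type*} [Field K] [Field L] [Algebra K L]

lemma lastCoordsProj_add {n k : ℕ} (x y : Fin n → L) :
    lastCoordsProj n k (x + y) = lastCoordsProj n k x + lastCoordsProj n k y := by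
  funext i
  simp only [lastCoordsProj, Pi.add_apply]
  split <;> simp

lemma lastCoordsProj_smul {n k : ℕ} (c : K) (x : Fin n → L) :
    lastCoordsProj n k (c • x) = c • lastCoordsProj n k x := by
  funext i
  simp only [lastCoordsProj, Pi.smul_apply]
  split <;> simp

/-- `lastCoordsProj` as a `K`-linear map. -/
noncomputable def projLin (K : Type*) {L : Type*} [Field K] [Field L] [Algebra K L]
    (n k : ℕ) : (Fin n → L) →ₗ[K] (Fin k → L) where
  toFun := lastCoordsProj n k
  map_add' := lastCoordsProj_add
  map_smul' c x := lastCoordsProj_smul c x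

@[simp] lemma projLin_apply (n k : ℕ) (x : Fin n → L) :
    projLin K n k x = lastCoordsProj n k x := rfl

/-- Appending a `0` coordinate at the end, as an `L`-linear map. -/
noncomputable def snocL (L : Type*) [Field L] (k : ℕ) :
    (Fin k → L) →ₗ[L] (Fin (k + 1) → L) where
  toFun x := Fin.snoc x 0
  map_add' x y := by
    funext i
    induction i using Fin.lastCases with
    | last => simp
    | cast i => simp
  map_smul' c x := by
    funext i
    induction i using Fin.lastCases with
    | last => simp
    | cast i => simp

@[simp] lemma snocL_apply (k : ℕ) (x : Fin k → L) :
    snocL L k x = Fin.snoc x 0 := rfl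

lemma snocL_injective (k : ℕ) : Function.Injective (snocL L k) := by
  intro x y h
  funext i
  have := congrFun h i.castSucc
  simpa using this

lemma range_liftBaseChange {M N : Type*} [AddCommGroup M] [Module K M]
    [AddCommGroup N] [Module K N] [Module L N] [IsScalarTower K L N]
    (f : M →ₗ[K] N) :
    LinearMap.range (LinearMap.liftBaseChange L f) = Submodule.span L (Set.range f) := by
  apply le_antisymm
  · rintro _ ⟨t, rfl⟩
    induction t using TensorProduct.induction_on with
    | zero => simp
    | tmul a m =>
      rw [LinearMap.liftBaseChange_tmul]
      exact Submodule.smul_mem _ _ (Submodule.subset_span ⟨m, rfl⟩)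
    | add x y hx hy =>
      rw [map_add]; exact add_mem hx hy
  · rw [Submodule.span_le]
    rintro _ ⟨m, rfl⟩
    exact ⟨1 ⊗ₜ m, by simp⟩

lemma surj_liftBaseChange_iff {k : ℕ} (s : Set (Fin k → L)) :
    Function.Surjective (LinearMap.liftBaseChange L (Submodule.span K s).subtype) ↔
      Submodule.span L s = ⊤ := by
  rw [← LinearMap.range_eq_top, range_liftBaseChange]
  have h : Set.range (Submodule.span K s).subtype = (Submodule.span K s : Set _) := by
    ext x; simp
  rw [h, Submodule.span_span_of_tower]

lemma inj_transfer {k k' : ℕ} (ι : (Fin k → L) →ₗ[L] (Fin k' → L))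
    (hι : Function.Injective ι)
    (G : Submodule K (Fin k → L)) (F : Submodule K (Fin k' → L))
    (hGF : ∀ x ∈ G, ι x ∈ F)
    (hF : Function.Injective (LinearMap.liftBaseChange L F.subtype)) :
    Function.Injective (LinearMap.liftBaseChange L G.subtype) := by
  set incl : G →ₗ[K] F :=
    LinearMap.codRestrict F ((ι.restrictScalars K).comp G.subtype)
      (fun x => hGF x x.2) with hincl_def
  have hincl : Function.Injective incl := by
    intro x y h
    apply Subtype.ext
    apply hι
    have := congrArg Subtype.val h
    exact this
  have hbc : Function.Injective (incl.baseChange L) := by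
    rw [LinearMap.baseChange_eq_ltensor]
    exact Module.Flat.lTensor_preserves_injective_linearMap incl hincl
  have hcomm : ∀ t, (LinearMap.liftBaseChange L F.subtype) (incl.baseChange L t)
      = ι ((LinearMap.liftBaseChange L G.subtype) t) := by
    intro t
    induction t using TensorProduct.induction_on with
    | zero => simp
    | tmul a m =>
      rw [LinearMap.baseChange_tmul, LinearMap.liftBaseChange_tmul,
        LinearMap.liftBaseChange_tmul, map_smul]
      rfl
    | add x y hx hy => simp only [map_add, hx, hy]
  intro x y h
  apply hbc
  apply hF
  rw [hcomm, hcomm, h]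

theorem lattice_triangularization_aux (K L : Type*) [Field K] [Field L] [Algebra K L] :
    ∀ (n : ℕ) (v : Fin n → (Fin n → L)),
      (∀ k : ℕ, 1 ≤ k → k ≤ n →
        Function.Bijective (LinearMap.liftBaseChange L
          (Submodule.span K (Set.range fun j : Fin n => lastCoordsProj n k (v j))).subtype)) →
      ∃ w : Fin n → (Fin n → L),
        Submodule.span K (Set.range w) = Submodule.span K (Set.range v) ∧
        (∀ i j : Fin n, j < i → w j i = 0) ∧
        (∀ j : Fin n, w j j ≠ 0) := by
  intro n
  induction n with
  | zero =>
    intro v _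
    exact ⟨v, rfl, fun i => i.elim0, fun j => j.elim0⟩
  | succ n IH =>
    intro v hlat
    have hg1 : ∀ x : Fin (n+1) → L, lastCoordsProj (n+1) 1 x = fun _ : Fin 1 => x (Fin.last n) := by
      intro x
      funext i
      have hi : i.val = 0 := by omega
      rw [lastCoordsProj, dif_pos (show n + 1 - 1 + i.val < n + 1 by omega)]
      congr 1
      exact Fin.ext (by simp [hi])
    have h1 := hlat 1 le_rfl (by omega)
    have hex : ∃ j0 : Fin (n+1), v j0 (Fin.last n) ≠ 0 := by
      by_contra hcon
      push_neg at hcon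
      have hsurj := (surj_liftBaseChange_iff (K := K)
        (Set.range fun j : Fin (n+1) => lastCoordsProj (n+1) 1 (v j))).mp h1.2
      have hmem : (fun _ : Fin 1 => (1:L)) ∈ Submodule.span L
          (Set.range fun j : Fin (n+1) => lastCoordsProj (n+1) 1 (v j)) := by
        rw [hsurj]; trivial
      rw [Submodule.mem_span_range_iff_exists_fun] at hmem
      obtain ⟨a, ha⟩ := hmem
      have hcf := congrFun ha 0
      rw [Finset.sum_apply] at hcf
      simp only [Pi.smul_apply, hg1, hcon, smul_zero, Finset.sum_const_zero] at hcf
      exact absurd hcf (by norm_num)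
    set F₁ := Submodule.span K (Set.range fun j : Fin (n+1) => lastCoordsProj (n+1) 1 (v j))
      with hF₁
    have hrank : Module.rank K F₁ ≤ 1 := by
      have hEq := LinearEquiv.rank_eq (R := L) (M := L ⊗[K] ↥F₁) (M₁ := Fin 1 → L)
        (LinearEquiv.ofBijective (LinearMap.liftBaseChange L F₁.subtype) h1)
      rw [Module.rank_baseChange, rank_fun'] at hEq
      simp only [Fintype.card_fin, Nat.cast_one] at hEq
      rw [Cardinal.lift_eq_one] at hEq
      exact hEq.le
    obtain ⟨v₀, hv₀⟩ := (rank_le_one_iff (K := K) (V := ↥F₁)).mp hrank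
    have hcoef : ∀ j : Fin (n+1), ∃ r : K, v j (Fin.last n) = r • ((v₀ : Fin 1 → L) 0) := by
      intro j
      have hmem : lastCoordsProj (n+1) 1 (v j) ∈ F₁ := Submodule.subset_span ⟨j, rfl⟩
      obtain ⟨r, hr⟩ := hv₀ ⟨_, hmem⟩
      refine ⟨r, ?_⟩
      have hcv := congrArg (fun z : F₁ => (z : Fin 1 → L) 0) hr
      simp only [SetLike.val_smul, Pi.smul_apply] at hcv
      rw [hcv, hg1]
    obtain ⟨j0, hj0⟩ := hex
    obtain ⟨r0, hr0⟩ := hcoef j0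
    have hr0ne : r0 ≠ 0 := by
      intro h; rw [h, zero_smul] at hr0; exact hj0 hr0
    have hmul : ∀ j : Fin (n+1), ∃ c : K, v j (Fin.last n) = c • v j0 (Fin.last n) := by
      intro j
      obtain ⟨r, hr⟩ := hcoef j
      refine ⟨r * r0⁻¹, ?_⟩
      rw [hr, hr0, smul_smul, mul_assoc, inv_mul_cancel₀ hr0ne, mul_one]
    set e : Equiv.Perm (Fin (n+1)) := Equiv.swap j0 (Fin.last n) with he
    set v₁ : Fin (n+1) → (Fin (n+1) → L) := v ∘ e with hv₁
    have hrange : Set.range v₁ = Set.range v := e.surjective.range_comp v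
    have hlat₁ : ∀ k : ℕ, 1 ≤ k → k ≤ n + 1 →
        Function.Bijective (LinearMap.liftBaseChange L
          (Submodule.span K (Set.range fun j : Fin (n+1) =>
            lastCoordsProj (n+1) k (v₁ j))).subtype) := by
      intro k hk1 hk2
      have hfeq : (fun j : Fin (n+1) => lastCoordsProj (n+1) k (v₁ j))
          = (fun j : Fin (n+1) => lastCoordsProj (n+1) k (v j)) ∘ ⇑e := by
        rw [hv₁]; rfl
      rw [hfeq, Function.Surjective.range_comp e.surjective]
      exact hlat k hk1 hk2
    have hd : v₁ (Fin.last n) (Fin.last n) ≠ 0 := by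
      simp only [hv₁, Function.comp_apply, he, Equiv.swap_apply_right]
      exact hj0
    have hmul₁ : ∀ j, ∃ c : K, v₁ j (Fin.last n) = c • v₁ (Fin.last n) (Fin.last n) := by
      intro j
      obtain ⟨cj, hcj⟩ := hmul (e j)
      refine ⟨cj, ?_⟩
      simp only [hv₁, Function.comp_apply, he, Equiv.swap_apply_right]
      exact hcj
    choose c hc using hmul₁
    set v' : Fin (n+1) → (Fin (n+1) → L) := fun j =>
      if j = Fin.last n then v₁ j else v₁ j - c j • v₁ (Fin.last n) with hv'
    have hvlast : v' (Fin.last n) = v₁ (Fin.last n) := by simp [hv']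
    have hz : ∀ i : Fin n, v' i.castSucc (Fin.last n) = 0 := by
      intro i
      have hne : i.castSucc ≠ Fin.last n := (Fin.castSucc_lt_last i).ne
      simp only [hv', if_neg hne, Pi.sub_apply, Pi.smul_apply, hc i.castSucc, sub_self]
    have hspan' : Submodule.span K (Set.range v') = Submodule.span K (Set.range v₁) := by
      apply le_antisymm <;> rw [Submodule.span_le] <;> rintro _ ⟨j, rfl⟩
      · by_cases h : j = Fin.last n
        · rw [hv']; simp only [if_pos h]
          exact Submodule.subset_span ⟨j, rfl⟩
        · rw [hv']; simp only [if_neg h]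
          exact sub_mem (Submodule.subset_span ⟨j, rfl⟩)
            (Submodule.smul_mem _ _ (Submodule.subset_span ⟨Fin.last n, rfl⟩))
      · by_cases h : j = Fin.last n
        · subst h
          rw [← hvlast]
          exact Submodule.subset_span ⟨Fin.last n, rfl⟩
        · have heq : v₁ j = v' j + c j • v' (Fin.last n) := by
            rw [hvlast, hv']; simp only [if_neg h]; abel
          rw [heq]
          exact add_mem (Submodule.subset_span ⟨j, rfl⟩)
            (Submodule.smul_mem _ _ (Submodule.subset_span ⟨Fin.last n, rfl⟩))
    have hFk : ∀ k : ℕ,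
        Submodule.span K (Set.range fun j : Fin (n+1) => lastCoordsProj (n+1) k (v' j))
          = Submodule.span K (Set.range fun j : Fin (n+1) => lastCoordsProj (n+1) k (v₁ j)) := by
      intro k
      have h1' : (Set.range fun j : Fin (n+1) => lastCoordsProj (n+1) k (v' j))
          = projLin K (n+1) k '' Set.range v' := by
        rw [← Set.range_comp]; rfl
      have h2' : (Set.range fun j : Fin (n+1) => lastCoordsProj (n+1) k (v₁ j))
          = projLin K (n+1) k '' Set.range v₁ := by
        rw [← Set.range_comp]; rfl
      rw [h1', h2', ← Submodule.map_span, ← Submodule.map_span, hspan']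
    have hlat' : ∀ k : ℕ, 1 ≤ k → k ≤ n + 1 →
        Function.Bijective (LinearMap.liftBaseChange L
          (Submodule.span K (Set.range fun j : Fin (n+1) =>
            lastCoordsProj (n+1) k (v' j))).subtype) := by
      intro k hk1 hk2
      rw [hFk k]
      exact hlat₁ k hk1 hk2
    set u : Fin n → (Fin n → L) := fun i m => v' i.castSucc m.castSucc with hu
    have hsnocu : ∀ i : Fin n, Fin.snoc (u i) 0 = v' i.castSucc := by
      intro i
      funext m
      induction m using Fin.lastCases with
      | last => rw [Fin.snoc_last]; exact (hz i).symm
      | cast m => rw [Fin.snoc_castSucc]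
    have hkey : ∀ (k : ℕ), 1 ≤ k → k ≤ n → ∀ i : Fin n,
        snocL L k (lastCoordsProj n k (u i)) = lastCoordsProj (n+1) (k+1) (v' i.castSucc) := by
      intro k hk1 hk2 i
      funext m
      induction m using Fin.lastCases with
      | last =>
        rw [snocL_apply, Fin.snoc_last, lastCoordsProj,
          dif_pos (show n + 1 - (k+1) + (Fin.last k).val < n + 1 by
            simp only [Fin.val_last]; omega)]
        have hidx : ∀ (h : n + 1 - (k+1) + (Fin.last k).val < n + 1),
            (⟨n + 1 - (k+1) + (Fin.last k).val, h⟩ : Fin (n+1)) = Fin.last n := by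
          intro h
          apply Fin.ext
          simp only [Fin.val_last]
          omega
        rw [hidx _, hz i]
      | cast m =>
        rw [snocL_apply, Fin.snoc_castSucc, lastCoordsProj, lastCoordsProj,
          dif_pos (show n - k + m.val < n by omega),
          dif_pos (show n + 1 - (k+1) + (m.castSucc).val < n + 1 by
            simp only [Fin.coe_castSucc]; omega)]
        simp only [hu]
        congr 1
        apply Fin.ext
        simp only [Fin.coe_castSucc]
        omega
    have hlatu : ∀ k : ℕ, 1 ≤ k → k ≤ n →
        Function.Bijective (LinearMap.liftBaseChange L
          (Submodule.span K (Set.range fun i : Fin n =>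
            lastCoordsProj n k (u i))).subtype) := by
      intro k hk1 hk2
      set G := Submodule.span K (Set.range fun i : Fin n => lastCoordsProj n k (u i)) with hG
      set F := Submodule.span K (Set.range fun j : Fin (n+1) =>
        lastCoordsProj (n+1) (k+1) (v' j)) with hF
      have hFbij := hlat' (k+1) (by omega) (by omega)
      have hGF : ∀ x ∈ G, snocL L k x ∈ F := by
        intro x hx
        have hle : G ≤ Submodule.comap ((snocL L k).restrictScalars K) F := by
          rw [hG, Submodule.span_le]
          rintro _ ⟨i, rfl⟩
          simp only [SetLike.mem_coe, Submodule.mem_comap, LinearMap.coe_restrictScalars]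
          rw [hkey k hk1 hk2 i]
          exact Submodule.subset_span ⟨i.castSucc, rfl⟩
        exact hle hx
      constructor
      · exact inj_transfer (snocL L k) (snocL_injective k) G F hGF hFbij.1
      · rw [surj_liftBaseChange_iff]
        have hFs : Submodule.span L (Set.range fun j : Fin (n+1) =>
            lastCoordsProj (n+1) (k+1) (v' j)) = ⊤ :=
          (surj_liftBaseChange_iff _).mp hFbij.2
        rw [eq_top_iff]
        rintro x -
        have hx : snocL L k x ∈ Submodule.span L (Set.range fun j : Fin (n+1) =>
            lastCoordsProj (n+1) (k+1) (v' j)) := by rw [hFs]; trivial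
        rw [Submodule.mem_span_range_iff_exists_fun] at hx
        obtain ⟨a, ha⟩ := hx
        have hlastv : ∀ i : Fin n,
            lastCoordsProj (n+1) (k+1) (v' i.castSucc) (Fin.last k) = 0 := by
          intro i
          rw [← hkey k hk1 hk2 i, snocL_apply, Fin.snoc_last]
        have hlastd : lastCoordsProj (n+1) (k+1) (v' (Fin.last n)) (Fin.last k)
            = v₁ (Fin.last n) (Fin.last n) := by
          rw [lastCoordsProj, dif_pos (show n + 1 - (k+1) + (Fin.last k).val < n + 1 by
            simp only [Fin.val_last]; omega)]
          rw [hvlast]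
          congr 1
          apply Fin.ext
          simp only [Fin.val_last]
          omega
        have h0 : a (Fin.last n) = 0 := by
          have hcf := congrFun ha (Fin.last k)
          rw [Finset.sum_apply, Fin.sum_univ_castSucc] at hcf
          simp only [Pi.smul_apply, hlastv, smul_zero, Finset.sum_const_zero, zero_add,
            hlastd, snocL_apply, Fin.snoc_last, smul_eq_mul, mul_zero] at hcf
          exact (mul_eq_zero.mp hcf).resolve_right hd
        have hxeq : snocL L k x
            = snocL L k (∑ i : Fin n, a i.castSucc • lastCoordsProj n k (u i)) := by
          rw [map_sum, ← ha, Fin.sum_univ_castSucc, h0, zero_smul, add_zero]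
          refine Finset.sum_congr rfl fun i _ => ?_
          rw [map_smul, hkey k hk1 hk2 i]
        rw [snocL_injective k hxeq]
        exact Submodule.sum_mem _ fun i _ =>
          Submodule.smul_mem _ _ (Submodule.subset_span ⟨i, rfl⟩)
    obtain ⟨w', hw'span, hw'tri, hw'diag⟩ := IH u hlatu
    set w : Fin (n+1) → (Fin (n+1) → L) :=
      Fin.snoc (fun i => Fin.snoc (w' i) 0) (v₁ (Fin.last n)) with hw
    have hwlast : w (Fin.last n) = v₁ (Fin.last n) := by
      rw [hw, Fin.snoc_last]
    have hwcast : ∀ i : Fin n, w i.castSucc = Fin.snoc (w' i) 0 := by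
      intro i
      rw [hw, Fin.snoc_castSucc]
    have hmapspan : Submodule.map ((snocL L n).restrictScalars K)
        (Submodule.span K (Set.range u))
        = Submodule.span K (Set.range fun i : Fin n => v' i.castSucc) := by
      have hfeq : (⇑((snocL L n).restrictScalars K) ∘ u) = fun i : Fin n => v' i.castSucc := by
        funext i
        simp only [Function.comp_apply, LinearMap.coe_restrictScalars, snocL_apply]
        exact hsnocu i
      rw [Submodule.map_span, ← Set.range_comp, hfeq]
    have hWV' : Submodule.span K (Set.range w) = Submodule.span K (Set.range v') := by
      apply le_antisymm <;> rw [Submodule.span_le] <;> rintro _ ⟨j, rfl⟩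
      · induction j using Fin.lastCases with
        | last =>
          rw [hwlast, ← hvlast]
          exact Submodule.subset_span ⟨Fin.last n, rfl⟩
        | cast i =>
          rw [hwcast i]
          have hm : Fin.snoc (w' i) 0 ∈ Submodule.map ((snocL L n).restrictScalars K)
              (Submodule.span K (Set.range w')) :=
            Submodule.mem_map_of_mem (Submodule.subset_span ⟨i, rfl⟩)
          rw [hw'span, hmapspan] at hm
          exact Submodule.span_mono (by rintro _ ⟨i', rfl⟩; exact ⟨i'.castSucc, rfl⟩) hm
      · induction j using Fin.lastCases with
        | last =>
          rw [hvlast, ← hwlast]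
          exact Submodule.subset_span ⟨Fin.last n, rfl⟩
        | cast i2 =>
          rw [← hsnocu i2]
          have hm : Fin.snoc (u i2) 0 ∈ Submodule.map ((snocL L n).restrictScalars K)
              (Submodule.span K (Set.range u)) :=
            Submodule.mem_map_of_mem (Submodule.subset_span ⟨i2, rfl⟩)
          rw [← hw'span, Submodule.map_span] at hm
          refine Submodule.span_le.mpr ?_ hm
          rintro _ ⟨_, ⟨i', rfl⟩, rfl⟩
          exact Submodule.subset_span ⟨i'.castSucc, by rw [hwcast i']; rfl⟩
    refine ⟨w, ?_, ?_, ?_⟩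
    · rw [hWV', hspan', hrange]
    · intro i j hji
      induction j using Fin.lastCases with
      | last => exact absurd hji (not_lt.mpr (Fin.le_last i))
      | cast j' =>
        rw [hwcast j']
        induction i using Fin.lastCases with
        | last => rw [Fin.snoc_last]
        | cast i' =>
          rw [Fin.snoc_castSucc]
          exact hw'tri i' j' (Fin.castSucc_lt_castSucc_iff.mp hji)
    · intro j
      induction j using Fin.lastCases with
      | last =>
        rw [hwlast]
        exact hd
      | cast j' =>
        rw [hwcast j', Fin.snoc_castSucc]
        exact hw'diag j'

end Aux

/-- If `v₁, …, vₙ` is an `L`-basis of `L^n` such that for every `1 ≤ k ≤ n` the `K`-span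
`F_k` of the projections of the `vⱼ` onto the last `k` coordinates is a `K`-lattice of `L^k`
(i.e. the multiplication map `L ⊗[K] F_k → L^k` is bijective), then there are vectors
`w₁, …, wₙ` with the same `K`-span as `v₁, …, vₙ` forming an upper triangular matrix with
nonzero diagonal entries. -/
theorem lattice_triangularization {K L : Type*} [Field K] [Field L] [Algebra K L]
    {n : ℕ} (hn : 1 ≤ n) (v : Fin n → (Fin n → L))
    (hindep : LinearIndependent L v) (hspan : Submodule.span L (Set.range v) = ⊤)
    (hlattice : ∀ k : ℕ, 1 ≤ k → k ≤ n →
      Function.Bijective (LinearMap.liftBaseChange L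
        (Submodule.span K (Set.range fun j : Fin n => lastCoordsProj n k (v j))).subtype)) :
    ∃ w : Fin n → (Fin n → L),
      Submodule.span K (Set.range w) = Submodule.span K (Set.range v) ∧
      (∀ i j : Fin n, j < i → w j i = 0) ∧
      (∀ j : Fin n, w j j ≠ 0) := by
  exact lattice_triangularization_aux K L n v hlattice
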